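/- The group of affine jointly even-signed permutations is generated by the affine doubly even-signed permutations together with the single loop ℓ_1. -/

import Mathlib

def IsAffineSigned (n : ℤ) (π : Equiv.Perm ℤ) : Prop :=
  (∀ i : ℤ, π (i + 2 * n) = π i + 2 * n) ∧ (∀ i : ℤ, π (-i) = -π i)

def negSet (π : Equiv.Perm ℤ) : Set ℤ := {i : ℤ | 0 < i ∧ π i < 0}

def bigSet (n : ℤ) (π : Equiv.Perm ℤ) : Set ℤ := {i : ℤ | i < n ∧ n < π i}

def IsDoublyEvenSigned (n : ℤ) (π : Equiv.Perm ℤ) : Prop :=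
  IsAffineSigned n π ∧ (negSet π).Finite ∧ (bigSet n π).Finite ∧
    Even (negSet π).ncard ∧ Even (bigSet n π).ncard

/-- An affine jointly even-signed permutation: `#neg(π) + #big(π)` is even. -/
def IsJointlyEvenSigned (n : ℤ) (π : Equiv.Perm ℤ) : Prop :=
  IsAffineSigned n π ∧ (negSet π).Finite ∧ (bigSet n π).Finite ∧
    Even ((negSet π).ncard + (bigSet n π).ncard)

def loopFun (n a i : ℤ) : ℤ :=
  if (2 * n) ∣ (i - a) then i + 2 * n
  else if (2 * n) ∣ (i + a) then i - 2 * n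
  else i

lemma mult_window {n a : ℤ} (hn : 2 ≤ n) (h : (2*n) ∣ a) (h1 : -(4*n) < a) (h2 : a < 4*n) :
    a = -(2*n) ∨ a = 0 ∨ a = 2*n := by
  obtain ⟨k, rfl⟩ := h
  have hk1 : k ≤ 1 := by nlinarith
  have hk2 : -1 ≤ k := by nlinarith
  interval_cases k <;> omega

lemma not_both {n i : ℤ} (hn : 2 ≤ n) (h1 : (2*n) ∣ (i - 1)) (h2 : (2*n) ∣ (i + 1)) : False := by
  have h3 : (2*n) ∣ ((i+1) - (i-1)) := dvd_sub h2 h1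
  rw [show (i+1) - (i-1) = 2 by ring] at h3
  rcases mult_window hn h3 (by linarith) (by linarith) with h | h | h <;> omega

lemma loop_affine {n : ℤ} (hn : 2 ≤ n) (i : ℤ) :
    loopFun n 1 (i + 2*n) = loopFun n 1 i + 2*n := by
  unfold loopFun
  have e1 : (2*n) ∣ (i + 2*n - 1) ↔ (2*n) ∣ (i - 1) := by
    rw [show i + 2*n - 1 = (i-1) + 2*n by ring]
    exact dvd_add_left (dvd_refl _)
  have e2 : (2*n) ∣ (i + 2*n + 1) ↔ (2*n) ∣ (i + 1) := by
    rw [show i + 2*n + 1 = (i+1) + 2*n by ring]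
    exact dvd_add_left (dvd_refl _)
  by_cases h1 : (2*n) ∣ (i - 1)
  · rw [if_pos (e1.mpr h1), if_pos h1]
  · rw [if_neg (fun h => h1 (e1.mp h)), if_neg h1]
    by_cases h2 : (2*n) ∣ (i + 1)
    · rw [if_pos (e2.mpr h2), if_pos h2]; ring
    · rw [if_neg (fun h => h2 (e2.mp h)), if_neg h2]

lemma loop_odd {n : ℤ} (hn : 2 ≤ n) (i : ℤ) :
    loopFun n 1 (-i) = -loopFun n 1 i := by
  unfold loopFun
  have e1 : (2*n) ∣ (-i - 1) ↔ (2*n) ∣ (i + 1) := by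
    rw [show -i - 1 = -(i+1) by ring, dvd_neg]
  have e2 : (2*n) ∣ (-i + 1) ↔ (2*n) ∣ (i - 1) := by
    rw [show -i + 1 = -(i-1) by ring, dvd_neg]
  by_cases h1 : (2*n) ∣ (i - 1)
  · rw [if_neg (fun h => not_both hn h1 (e1.mp h)), if_pos (e2.mpr h1), if_pos h1]; ring
  · by_cases h2 : (2*n) ∣ (i + 1)
    · rw [if_pos (e1.mpr h2), if_neg h1, if_pos h2]; ring
    · rw [if_neg (fun h => h2 (e1.mp h)), if_neg (fun h => h1 (e2.mp h)), if_neg h1, if_neg h2]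

lemma linv_pos {n : ℤ} (hn : 2 ≤ n) (ℓ₁ : Equiv.Perm ℤ) (hℓ : ∀ i, ℓ₁ i = loopFun n 1 i)
    (j : ℤ) : 0 < ℓ₁.symm j ↔ ((0 < j ∧ j ≠ 1) ∨ j = -1) := by
  set i := ℓ₁.symm j with hi
  have hj : loopFun n 1 i = j := by rw [← hℓ]; exact ℓ₁.apply_symm_apply j
  unfold loopFun at hj
  by_cases h1 : (2*n) ∣ (i - 1)
  · rw [if_pos h1] at hj
    have hd : (2*n) ∣ (j - 1) := by
      have := dvd_add h1 (dvd_refl (2*n))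
      rwa [show i - 1 + 2*n = j - 1 by omega] at this
    constructor
    · intro hip
      left
      omega
    · rintro (⟨hj0, hj1⟩ | rfl)
      · by_contra hip
        push_neg at hip
        rcases mult_window hn hd (by omega) (by omega) with h | h | h <;> omega
      · rcases mult_window hn hd (by omega) (by omega) with h | h | h <;> omega
  · rw [if_neg h1] at hj
    by_cases h2 : (2*n) ∣ (i + 1)
    · rw [if_pos h2] at hj
      have hd : (2*n) ∣ (j + 1) := by
        have := dvd_sub h2 (dvd_refl (2*n))
        rwa [show i + 1 - 2*n = j + 1 by omega] at this
      constructor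
      · intro hip
        by_contra hc
        push_neg at hc
        rcases mult_window hn hd (by omega) (by omega) with h | h | h <;> omega
      · rintro (⟨hj0, hj1⟩ | rfl) <;> omega
    · rw [if_neg h2] at hj
      constructor
      · intro hip
        left
        refine ⟨by omega, fun hc => h1 ?_⟩
        rw [show i - 1 = 0 by omega]
        exact dvd_zero _
      · rintro (⟨hj0, hj1⟩ | rfl)
        · omega
        · exact absurd (by rw [show i + 1 = 0 by omega]; exact dvd_zero _) h2

lemma linv_lt {n : ℤ} (hn : 2 ≤ n) (ℓ₁ : Equiv.Perm ℤ) (hℓ : ∀ i, ℓ₁ i = loopFun n 1 i)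
    (j : ℤ) : ℓ₁.symm j < n ↔ ((j < n ∧ j ≠ -1) ∨ j = 2*n + 1) := by
  set i := ℓ₁.symm j with hi
  have hj : loopFun n 1 i = j := by rw [← hℓ]; exact ℓ₁.apply_symm_apply j
  unfold loopFun at hj
  by_cases h1 : (2*n) ∣ (i - 1)
  · rw [if_pos h1] at hj
    have hd : (2*n) ∣ (j - 1) := by
      have := dvd_add h1 (dvd_refl (2*n))
      rwa [show i - 1 + 2*n = j - 1 by omega] at this
    constructor
    · intro hip
      by_cases hjn : j < n
      · left
        refine ⟨hjn, fun hc => ?_⟩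
        rcases mult_window hn hd (by omega) (by omega) with h | h | h <;> omega
      · right
        rcases mult_window hn hd (by omega) (by omega) with h | h | h <;> omega
    · rintro (⟨hj0, hj1⟩ | rfl) <;> omega
  · rw [if_neg h1] at hj
    by_cases h2 : (2*n) ∣ (i + 1)
    · rw [if_pos h2] at hj
      have hd : (2*n) ∣ (j + 1) := by
        have := dvd_sub h2 (dvd_refl (2*n))
        rwa [show i + 1 - 2*n = j + 1 by omega] at this
      constructor
      · intro hip
        left
        omega
      · rintro (⟨hj0, hj1⟩ | rfl)
        · by_contra hc
          push_neg at hc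
          rcases mult_window hn hd (by omega) (by omega) with h | h | h <;> omega
        · rcases mult_window hn hd (by omega) (by omega) with h | h | h <;> omega
    · rw [if_neg h2] at hj
      constructor
      · intro hip
        left
        refine ⟨by omega, fun hc => h2 ?_⟩
        rw [show i + 1 = 0 by omega]
        exact dvd_zero _
      · rintro (⟨hj0, hj1⟩ | rfl)
        · omega
        · exact absurd (by rw [show i - 1 = 2*n by omega]) h1

lemma transfer_insert (A B : Set ℤ) (ℓ : Equiv.Perm ℤ) (a : ℤ)
    (hE : ⇑ℓ '' A = insert a B) (ha : a ∉ B) :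
    (A.Finite ↔ B.Finite) ∧ (B.Finite → Odd (A.ncard + B.ncard)) := by
  have hcard : A.ncard = (insert a B).ncard := by
    rw [← hE, Set.ncard_image_of_injective _ ℓ.injective]
  have hfin : A.Finite ↔ (insert a B).Finite := by
    constructor
    · intro h; rw [← hE]; exact h.image _
    · intro h
      exact Set.Finite.of_finite_image (hE ▸ h) ℓ.injective.injOn
  constructor
  · rw [hfin]
    exact ⟨fun h => h.subset (Set.subset_insert a B), fun h => h.insert a⟩
  · intro hB
    rw [hcard, Set.ncard_insert_of_notMem ha hB]
    exact ⟨B.ncard, by omega⟩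

lemma transfer_diff (A B : Set ℤ) (ℓ : Equiv.Perm ℤ) (a : ℤ)
    (hE : ⇑ℓ '' A = B \ {a}) (ha : a ∈ B) :
    (A.Finite ↔ B.Finite) ∧ (B.Finite → Odd (A.ncard + B.ncard)) := by
  have hcard : A.ncard = (B \ {a}).ncard := by
    rw [← hE, Set.ncard_image_of_injective _ ℓ.injective]
  have hfin : A.Finite ↔ (B \ {a}).Finite := by
    constructor
    · intro h; rw [← hE]; exact h.image _
    · intro h
      exact Set.Finite.of_finite_image (hE ▸ h) ℓ.injective.injOn
  constructor
  · rw [hfin]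
    constructor
    · intro h
      exact (h.insert a).subset (fun x hx => by by_cases hxa : x = a <;> simp [hxa, hx])
    · intro h; exact h.diff
  · intro hB
    have := Set.ncard_diff_singleton_add_one ha hB
    rw [hcard]
    exact ⟨(B \ {a}).ncard, by omega⟩

lemma aff_vals {n : ℤ} (hn : 2 ≤ n) (σ : Equiv.Perm ℤ) (hσ : IsAffineSigned n σ) :
    σ 0 = 0 ∧ σ n = n ∧ σ 1 ≠ 0 ∧ σ 1 ≠ -n := by
  have h0 : σ 0 = 0 := by have := hσ.2 0; simp at this; linarith
  have hnn : σ n = n := by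
    have h1 := hσ.1 (-n)
    have h2 := hσ.2 n
    rw [show -n + 2*n = n by ring] at h1
    omega
  refine ⟨h0, hnn, fun hc => ?_, fun hc => ?_⟩
  · have : (1 : ℤ) = 0 := σ.injective (by rw [hc, h0])
    omega
  · have : (1 : ℤ) = -n := σ.injective (by rw [hc, hσ.2 n, hnn])
    omega

lemma step {n : ℤ} (hn : 2 ≤ n) (ℓ₁ : Equiv.Perm ℤ) (hℓ : ∀ i, ℓ₁ i = loopFun n 1 i)
    (σ : Equiv.Perm ℤ) (hσ : IsAffineSigned n σ) :
    ((negSet (σ * ℓ₁)).Finite ↔ (negSet σ).Finite) ∧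
    ((negSet σ).Finite → Odd ((negSet (σ * ℓ₁)).ncard + (negSet σ).ncard)) ∧
    ((bigSet n (σ * ℓ₁)).Finite ↔ (bigSet n σ).Finite) ∧
    ((bigSet n σ).Finite → Odd ((bigSet n (σ * ℓ₁)).ncard + (bigSet n σ).ncard)) := by
  obtain ⟨h0, hnn, hne0, hnen⟩ := aff_vals hn σ hσ
  have hm1 : σ (-1) = -σ 1 := hσ.2 1
  have h2n1 : σ (2*n+1) = σ 1 + 2*n := by
    have := hσ.1 1
    rwa [show (1:ℤ) + 2*n = 2*n+1 by ring] at this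
  have Eneg : ⇑ℓ₁ '' (negSet (σ * ℓ₁)) = {j | ((0 < j ∧ j ≠ 1) ∨ j = -1) ∧ σ j < 0} := by
    ext j
    rw [Equiv.image_eq_preimage_symm]
    simp only [Set.mem_preimage, negSet, Set.mem_setOf_eq, Equiv.Perm.mul_apply,
      Equiv.apply_symm_apply]
    rw [linv_pos hn ℓ₁ hℓ j]
  have Ebig : ⇑ℓ₁ '' (bigSet n (σ * ℓ₁)) = {j | ((j < n ∧ j ≠ -1) ∨ j = 2*n+1) ∧ n < σ j} := by
    ext j
    rw [Equiv.image_eq_preimage_symm]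
    simp only [Set.mem_preimage, bigSet, Set.mem_setOf_eq, Equiv.Perm.mul_apply,
      Equiv.apply_symm_apply]
    rw [linv_lt hn ℓ₁ hℓ j]
  have hneg : ((negSet (σ * ℓ₁)).Finite ↔ (negSet σ).Finite) ∧
      ((negSet σ).Finite → Odd ((negSet (σ * ℓ₁)).ncard + (negSet σ).ncard)) := by
    rcases lt_or_gt_of_ne hne0 with hc | hc
    · -- σ 1 < 0 : image = negSet σ \ {1}
      refine transfer_diff _ _ ℓ₁ 1 ?_ ⟨one_pos, hc⟩
      rw [Eneg]
      ext j
      simp only [Set.mem_setOf_eq, Set.mem_diff, Set.mem_singleton_iff, negSet]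
      constructor
      · rintro ⟨(⟨hj0, hj1⟩ | rfl), hs⟩
        · exact ⟨⟨hj0, hs⟩, hj1⟩
        · rw [hm1] at hs; omega
      · rintro ⟨⟨hj0, hs⟩, hj1⟩
        exact ⟨Or.inl ⟨hj0, hj1⟩, hs⟩
    · -- σ 1 > 0 : image = insert (-1) (negSet σ)
      refine transfer_insert _ _ ℓ₁ (-1) ?_ (by simp only [negSet, Set.mem_setOf_eq, not_and]; omega)
      rw [Eneg]
      ext j
      simp only [Set.mem_setOf_eq, Set.mem_insert_iff, negSet]
      constructor
      · rintro ⟨(⟨hj0, hj1⟩ | rfl), hs⟩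
        · exact Or.inr ⟨hj0, hs⟩
        · exact Or.inl rfl
      · rintro (rfl | ⟨hj0, hs⟩)
        · exact ⟨Or.inr rfl, by rw [hm1]; omega⟩
        · refine ⟨Or.inl ⟨hj0, fun hj1 => ?_⟩, hs⟩
          rw [hj1] at hs; omega
  have hbig : ((bigSet n (σ * ℓ₁)).Finite ↔ (bigSet n σ).Finite) ∧
      ((bigSet n σ).Finite → Odd ((bigSet n (σ * ℓ₁)).ncard + (bigSet n σ).ncard)) := by
    rcases lt_or_gt_of_ne hnen with hc | hc
    · -- σ 1 < -n : image = bigSet σ \ {-1}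
      refine transfer_diff _ _ ℓ₁ (-1) ?_ ⟨by omega, by rw [hm1]; omega⟩
      rw [Ebig]
      ext j
      simp only [Set.mem_setOf_eq, Set.mem_diff, Set.mem_singleton_iff, bigSet]
      constructor
      · rintro ⟨(⟨hj0, hj1⟩ | rfl), hs⟩
        · exact ⟨⟨hj0, hs⟩, hj1⟩
        · rw [h2n1] at hs; omega
      · rintro ⟨⟨hj0, hs⟩, hj1⟩
        exact ⟨Or.inl ⟨hj0, hj1⟩, hs⟩
    · -- σ 1 > -n : image = insert (2n+1) (bigSet σ)
      refine transfer_insert _ _ ℓ₁ (2*n+1) ?_ (by simp only [bigSet, Set.mem_setOf_eq, not_and]; omega)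
      rw [Ebig]
      ext j
      simp only [Set.mem_setOf_eq, Set.mem_insert_iff, bigSet]
      constructor
      · rintro ⟨(⟨hj0, hj1⟩ | rfl), hs⟩
        · exact Or.inr ⟨hj0, hs⟩
        · exact Or.inl rfl
      · rintro (rfl | ⟨hj0, hs⟩)
        · exact ⟨Or.inr rfl, by rw [h2n1]; omega⟩
        · refine ⟨Or.inl ⟨hj0, fun hj1 => ?_⟩, hs⟩
          rw [hj1, hm1] at hs; omega
  exact ⟨hneg.1, hneg.2, hbig.1, hbig.2⟩


/-- The group of affine jointly even-signed permutations is generated by the affine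
doubly even-signed permutations together with the single loop `ℓ₁`. -/
theorem jointlyEvenSigned_generated (n : ℤ) (hn : 2 ≤ n)
    (ℓ₁ : Equiv.Perm ℤ) (hℓ : ∀ i, ℓ₁ i = loopFun n 1 i)
    (π : Equiv.Perm ℤ) (hπ : IsJointlyEvenSigned n π) :
    π ∈ Subgroup.closure ({σ : Equiv.Perm ℤ | IsDoublyEvenSigned n σ} ∪ {ℓ₁}) := by
  obtain ⟨haff, hfn, hfb, hev⟩ := hπ
  by_cases hEn : Even (negSet π).ncard
  · have hEb : Even (bigSet n π).ncard := (Nat.even_add.mp hev).mp hEn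
    exact Subgroup.subset_closure (Or.inl ⟨haff, hfn, hfb, hEn, hEb⟩)
  · have hEb : ¬ Even (bigSet n π).ncard := fun h => hEn ((Nat.even_add.mp hev).mpr h)
    set σ := π * ℓ₁⁻¹ with hσdef
    have hmul : σ * ℓ₁ = π := by rw [hσdef, inv_mul_cancel_right]
    have hsa : ∀ i : ℤ, ℓ₁.symm (i + 2*n) = ℓ₁.symm i + 2*n := by
      intro i
      apply ℓ₁.injective
      rw [Equiv.apply_symm_apply, hℓ, loop_affine hn, ← hℓ, Equiv.apply_symm_apply]
    have hso : ∀ i : ℤ, ℓ₁.symm (-i) = -ℓ₁.symm i := by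
      intro i
      apply ℓ₁.injective
      rw [Equiv.apply_symm_apply, hℓ, loop_odd hn, ← hℓ, Equiv.apply_symm_apply]
    have hσaff : IsAffineSigned n σ := by
      constructor
      · intro i
        show π (ℓ₁⁻¹ (i + 2*n)) = π (ℓ₁⁻¹ i) + 2*n
        rw [Equiv.Perm.inv_def, hsa, haff.1]
      · intro i
        show π (ℓ₁⁻¹ (-i)) = -π (ℓ₁⁻¹ i)
        rw [Equiv.Perm.inv_def, hso, haff.2]
    obtain ⟨hfiff, hodd, hfiffb, hoddb⟩ := step hn ℓ₁ hℓ σ hσaff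
    rw [hmul] at hfiff hodd hfiffb hoddb
    have hfnσ : (negSet σ).Finite := hfiff.mp hfn
    have hfbσ : (bigSet n σ).Finite := hfiffb.mp hfb
    have hEnσ : Even (negSet σ).ncard := by
      have h1 := hodd hfnσ
      rw [Nat.even_iff] at hEn ⊢
      rw [Nat.odd_iff] at h1
      omega
    have hEbσ : Even (bigSet n σ).ncard := by
      have h1 := hoddb hfbσ
      rw [Nat.even_iff] at hEb ⊢
      rw [Nat.odd_iff] at h1
      omega
    have hσmem : σ ∈ Subgroup.closure ({τ : Equiv.Perm ℤ | IsDoublyEvenSigned n τ} ∪ {ℓ₁}) :=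
      Subgroup.subset_closure (Or.inl ⟨hσaff, hfnσ, hfbσ, hEnσ, hEbσ⟩)
    have hℓmem : ℓ₁ ∈ Subgroup.closure ({τ : Equiv.Perm ℤ | IsDoublyEvenSigned n τ} ∪ {ℓ₁}) :=
      Subgroup.subset_closure (Or.inr rfl)
    rw [← hmul]
    exact Subgroup.mul_mem _ hσmem hℓmem
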